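/- Let P be a row-stochastic matrix on finite S, γ ∈ (0,1), ξ ∈ ℝ^S with ξ ≥ 0, and α ≥ 0. Suppose a sequence of vectors e⁽⁰⁾, e⁽¹⁾, …, e⁽ᴸ⁾ ∈ ℝ^S satisfies 0 ≤ e⁽⁰⁾ ≤ α𝟏 and, for each ℓ ∈ [L] and each coordinate i, either e⁽ℓ⁾(i) ≤ γ(P e⁽ℓ⁻¹⁾)(i) + ξ(i) or e⁽ℓ⁾(i) ≤ γ e⁽ℓ⁻¹⁾(i), and all e⁽ℓ⁾ ≥ 0. Then e⁽ᴸ⁾ ≤ γᴸ α 𝟏 + ∑_{k=0}^{L} γᵏ Pᵏ ξ entrywise. -/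
import Mathlib


open Finset Matrix

/-- Error accumulation bound for approximate value iteration:
if each step either contracts or contracts through `P` with additive error `ξ`,
then `e⁽ᴸ⁾ ≤ γᴸ α 𝟏 + ∑_{k=0}^{L} γᵏ Pᵏ ξ` entrywise. -/
theorem stmt_9 {S : Type*} [Fintype S] [DecidableEq S] [Nonempty S]
    (P : Matrix S S ℝ) (hP0 : ∀ s t, 0 ≤ P s t) (hP1 : ∀ s, ∑ t, P s t = 1)
    (γ : ℝ) (hγ0 : 0 < γ) (hγ1 : γ < 1)
    (ξ : S → ℝ) (hξ : ∀ s, 0 ≤ ξ s) (α : ℝ) (hα : 0 ≤ α)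
    (L : ℕ) (e : ℕ → S → ℝ)
    (he0 : ∀ i, 0 ≤ e 0 i ∧ e 0 i ≤ α)
    (hpos : ∀ ℓ i, 0 ≤ e ℓ i)
    (hstep : ∀ ℓ ∈ Finset.Icc 1 L, ∀ i,
      e ℓ i ≤ γ * (P *ᵥ e (ℓ - 1)) i + ξ i ∨ e ℓ i ≤ γ * e (ℓ - 1) i) :
    ∀ i, e L i ≤ γ ^ L * α + ∑ k ∈ Finset.range (L + 1), γ ^ k * ((P ^ k) *ᵥ ξ) i := by
  have hpowE : ∀ k (s t : S), 0 ≤ (P ^ k) s t := by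
    intro k
    induction k with
    | zero => intro s t; by_cases h : s = t <;> simp [Matrix.one_apply, h]
    | succ n ih =>
      intro s t
      rw [pow_succ, Matrix.mul_apply]
      exact Finset.sum_nonneg fun u _ => mul_nonneg (ih s u) (hP0 u t)
  have hpowξ : ∀ k (i : S), 0 ≤ ((P ^ k) *ᵥ ξ) i := fun k i =>
    Finset.sum_nonneg fun t _ => mul_nonneg (hpowE k i t) (hξ t)
  have key : ∀ ℓ, ℓ ≤ L → ∀ i,
      e ℓ i ≤ γ ^ ℓ * α + ∑ k ∈ Finset.range (ℓ + 1), γ ^ k * ((P ^ k) *ᵥ ξ) i := by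
    intro ℓ
    induction ℓ with
    | zero =>
      intro _ i
      have h0 : (0:ℝ) ≤ ∑ k ∈ Finset.range (0 + 1), γ ^ k * ((P ^ k) *ᵥ ξ) i :=
        Finset.sum_nonneg fun k _ => mul_nonneg (pow_nonneg hγ0.le k) (hpowξ k i)
      have := (he0 i).2
      simp only [pow_zero, one_mul]
      linarith
    | succ n ih =>
      intro hn i
      have hn' : n ≤ L := Nat.le_of_succ_le hn
      have ihb := ih hn'
      have hmem : n + 1 ∈ Finset.Icc 1 L :=
        Finset.mem_Icc.mpr ⟨Nat.succ_le_succ (Nat.zero_le n), hn⟩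
      have hsucc : ∑ k ∈ Finset.range (n + 2), γ ^ k * ((P ^ k) *ᵥ ξ) i
          = (∑ k ∈ Finset.range (n + 1), γ ^ (k + 1) * ((P ^ (k + 1)) *ᵥ ξ) i) + ξ i := by
        rw [Finset.sum_range_succ' (fun k => γ ^ k * ((P ^ k) *ᵥ ξ) i) (n + 1)]
        simp [Matrix.one_mulVec]
      rcases hstep (n + 1) hmem i with h | h
      · simp only [Nat.add_sub_cancel] at h
        have hPe : (P *ᵥ e n) i
            ≤ γ ^ n * α + ∑ k ∈ Finset.range (n + 1), γ ^ k * ((P ^ (k + 1)) *ᵥ ξ) i := by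
          have h1 : (P *ᵥ e n) i ≤ ∑ t, P i t *
              (γ ^ n * α + ∑ k ∈ Finset.range (n + 1), γ ^ k * ((P ^ k) *ᵥ ξ) t) :=
            Finset.sum_le_sum fun t _ => mul_le_mul_of_nonneg_left (ihb t) (hP0 i t)
          refine h1.trans_eq ?_
          have h2 : ∀ t : S, P i t *
              (γ ^ n * α + ∑ k ∈ Finset.range (n + 1), γ ^ k * ((P ^ k) *ᵥ ξ) t)
              = P i t * (γ ^ n * α)
                + ∑ k ∈ Finset.range (n + 1), γ ^ k * (P i t * ((P ^ k) *ᵥ ξ) t) := by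
            intro t
            rw [mul_add, Finset.mul_sum]
            congr 1
            exact Finset.sum_congr rfl fun k _ => by ring
          simp only [h2]
          rw [Finset.sum_add_distrib, ← Finset.sum_mul, hP1 i, one_mul]
          congr 1
          rw [Finset.sum_comm]
          refine Finset.sum_congr rfl fun k _ => ?_
          rw [← Finset.mul_sum]
          congr 1
          have : P *ᵥ ((P ^ k) *ᵥ ξ) = (P ^ (k + 1)) *ᵥ ξ := by
            rw [Matrix.mulVec_mulVec, ← pow_succ']
          calc ∑ t, P i t * ((P ^ k) *ᵥ ξ) t = (P *ᵥ ((P ^ k) *ᵥ ξ)) i := rfl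
            _ = ((P ^ (k + 1)) *ᵥ ξ) i := by rw [this]
        have := mul_le_mul_of_nonneg_left hPe hγ0.le
        rw [hsucc]
        rw [mul_add, Finset.mul_sum] at this
        have hsum : ∀ k ∈ Finset.range (n + 1),
            γ * (γ ^ k * ((P ^ (k + 1)) *ᵥ ξ) i) = γ ^ (k + 1) * ((P ^ (k + 1)) *ᵥ ξ) i := by
          intro k _; ring
        rw [Finset.sum_congr rfl hsum] at this
        have hp : γ * (γ ^ n * α) = γ ^ (n + 1) * α := by ring
        linarith
      · simp only [Nat.add_sub_cancel] at h
        have h2 : γ * e n i ≤ γ ^ (n + 1) * α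
            + ∑ k ∈ Finset.range (n + 1), γ ^ (k + 1) * ((P ^ k) *ᵥ ξ) i := by
          have := mul_le_mul_of_nonneg_left (ihb i) hγ0.le
          rw [mul_add, Finset.mul_sum] at this
          have hsum : ∀ k ∈ Finset.range (n + 1),
              γ * (γ ^ k * ((P ^ k) *ᵥ ξ) i) = γ ^ (k + 1) * ((P ^ k) *ᵥ ξ) i := by
            intro k _; ring
          rw [Finset.sum_congr rfl hsum] at this
          have hp : γ * (γ ^ n * α) = γ ^ (n + 1) * α := by ring
          linarith
        have h3 : ∑ k ∈ Finset.range (n + 1), γ ^ (k + 1) * ((P ^ k) *ᵥ ξ) i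
            ≤ ∑ k ∈ Finset.range (n + 2), γ ^ k * ((P ^ k) *ᵥ ξ) i := by
          have h6 : ∑ k ∈ Finset.range (n + 2), γ ^ k * ((P ^ k) *ᵥ ξ) i
              = (∑ k ∈ Finset.range (n + 1), γ ^ k * ((P ^ k) *ᵥ ξ) i)
                + γ ^ (n + 1) * ((P ^ (n + 1)) *ᵥ ξ) i := Finset.sum_range_succ _ _
          have h4 : ∑ k ∈ Finset.range (n + 1), γ ^ (k + 1) * ((P ^ k) *ᵥ ξ) i
              ≤ ∑ k ∈ Finset.range (n + 1), γ ^ k * ((P ^ k) *ᵥ ξ) i :=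
            Finset.sum_le_sum fun k _ => mul_le_mul_of_nonneg_right
              (pow_le_pow_of_le_one hγ0.le hγ1.le (Nat.le_succ k)) (hpowξ k i)
          have h5 : 0 ≤ γ ^ (n + 1) * ((P ^ (n + 1)) *ᵥ ξ) i :=
            mul_nonneg (pow_nonneg hγ0.le _) (hpowξ (n + 1) i)
          linarith
        linarith
  exact key L le_rfl
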